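/- arXiv:2101.11166 — 2 statements merged into one kernel-verified Lean document; each statement's English description precedes it below -/
import Mathlib

section
/- For γ > 0, a convex function f, and random vector w with rate function ρ, the chain f(E[w]) ≤ (1/γ) sup_z (γ f(z) − ρ(z)) ≤ R_γ(f(w)) holds; in particular the rate-function bound is at least as strong as Jensen's inequality. -/
open MeasureTheory Real

lemma exists_subgrad {n : ℕ} {f : (Fin n → ℝ) → ℝ} (hf : ConvexOn ℝ Set.univ f)
    (z : Fin n → ℝ) : ∃ y : Fin n → ℝ, ∀ x, ∑ i, (x i - z i) * y i ≤ f x - f z := by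
  have hcont : Continuous f := by
    rw [← continuousOn_univ]
    exact hf.continuousOn isOpen_univ
  set S : Set ((Fin n → ℝ) × ℝ) := {p | p.1 ∈ Set.univ ∧ f p.1 < p.2} with hS
  have hconv : Convex ℝ S := hf.convex_strict_epigraph
  have hopen : IsOpen S := by
    have : S = {p : (Fin n → ℝ) × ℝ | f p.1 < p.2} := by
      ext p; simp [hS]
    rw [this]
    exact isOpen_lt (hcont.comp continuous_fst) continuous_snd
  have hmem : (z, f z) ∉ S := fun h => lt_irrefl _ h.2
  obtain ⟨L, hL⟩ := geometric_hahn_banach_open_point hconv hopen hmem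
  set b : ℝ := L (0, 1) with hb
  have hLsplit : ∀ (x : Fin n → ℝ) (t : ℝ), L (x, t) = L (x, 0) + t * b := by
    intro x t
    have : (x, t) = (x, (0:ℝ)) + t • ((0 : Fin n → ℝ), (1:ℝ)) := by
      simp [Prod.ext_iff]
    rw [this, map_add, L.map_smul, smul_eq_mul, hb, mul_comm]
  have hbneg : b < 0 := by
    have h1 := hL (z, f z + 1) ⟨Set.mem_univ _, by show f z < f z + 1; linarith⟩
    rw [hLsplit z (f z + 1), hLsplit z (f z)] at h1
    linarith
  have hkey : ∀ x, L (x, f x) ≤ L (z, f z) := by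
    intro x
    refine le_of_forall_pos_le_add fun ε hε => ?_
    have hδ : 0 < ε / (-b) := div_pos hε (by linarith)
    have h1 := hL (x, f x + ε / (-b)) ⟨Set.mem_univ _, by show f x < f x + ε / (-b); linarith⟩
    rw [hLsplit x (f x + ε / (-b))] at h1
    rw [hLsplit x (f x), hLsplit z (f z)] at *
    have hbne : b ≠ 0 := hbneg.ne
    have : (ε / (-b)) * b = -ε := by rw [div_neg, neg_mul, div_mul_cancel₀ _ hbne]
    nlinarith [this]
  set g : (Fin n → ℝ) →ₗ[ℝ] ℝ := L.toLinearMap.comp (LinearMap.inl ℝ (Fin n → ℝ) ℝ) with hg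
  have hgL : ∀ x, g x = L (x, 0) := fun x => rfl
  refine ⟨fun i => g (fun j => if i = j then 1 else 0) / (-b), fun x => ?_⟩
  have hsum : ∑ i, (x i - z i) * (g (fun j => if i = j then 1 else 0) / (-b))
      = g (x - z) / (-b) := by
    rw [LinearMap.pi_apply_eq_sum_univ g (x - z), Finset.sum_div]
    refine Finset.sum_congr rfl fun i _ => ?_
    simp [mul_div_assoc]
  rw [hsum]
  have h2 := hkey x
  rw [hLsplit x (f x), hLsplit z (f z)] at h2
  have hgdiff : g (x - z) = L (x, 0) - L (z, 0) := by rw [map_sub, hgL, hgL]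
  rw [div_le_iff₀ (by linarith : (0:ℝ) < -b), hgdiff]
  nlinarith


/-- Chain of bounds: f(E[w]) ≤ (1/γ) sup_z (γ f(z) − ρ(z)) ≤ R_γ(f(w)),
so the rate-function bound is at least as strong as Jensen's inequality. -/
theorem risk_bound_chain {Ω : Type*} [MeasurableSpace Ω]
    (μ : Measure Ω) [IsProbabilityMeasure μ] {n : ℕ}
    (w : Ω → Fin n → ℝ)
    (c : (Fin n → ℝ) → ℝ) (ρ : (Fin n → ℝ) → ℝ)
    (f : (Fin n → ℝ) → ℝ) (γ : ℝ) (hγ : 0 < γ)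
    (hf : ConvexOn ℝ Set.univ f)
    (hw : ∀ i, Integrable (fun ω => w ω i) μ)
    (hint : ∀ y : Fin n → ℝ,
      Integrable (fun ω => Real.exp (∑ i, w ω i * y i)) μ)
    (hc : ∀ y, c y = Real.log (∫ ω, Real.exp (∑ i, w ω i * y i) ∂μ))
    (hρ : ∀ x, IsLUB {r : ℝ | ∃ y : Fin n → ℝ, r = ∑ i, x i * y i - c y} (ρ x))
    (hρmean : ρ (fun i => ∫ ω, w ω i ∂μ) = 0)
    (hfint : Integrable (fun ω => Real.exp (γ * f (w ω))) μ) :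
    f (fun i => ∫ ω, w ω i ∂μ)
        ≤ (1 / γ) * (⨆ z : Fin n → ℝ, (γ * f z - ρ z)) ∧
    (1 / γ) * (⨆ z : Fin n → ℝ, (γ * f z - ρ z))
        ≤ (1 / γ) * Real.log (∫ ω, Real.exp (γ * f (w ω)) ∂μ) := by
  set I := ∫ ω, Real.exp (γ * f (w ω)) ∂μ with hI
  have hIpos : 0 < I := integral_exp_pos hfint
  have key : ∀ z : Fin n → ℝ, γ * f z - ρ z ≤ Real.log I := by
    intro z
    obtain ⟨y, hy⟩ := exists_subgrad hf z
    set y' : Fin n → ℝ := fun i => γ * y i with hy'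
    have hpt : ∀ ω, Real.exp (∑ i, w ω i * y' i)
        ≤ Real.exp (∑ i, z i * y' i - γ * f z) * Real.exp (γ * f (w ω)) := by
      intro ω
      rw [← Real.exp_add]
      apply Real.exp_le_exp.mpr
      have h1 := hy (w ω)
      have hsum : ∑ i, w ω i * y' i - ∑ i, z i * y' i
          = γ * ∑ i, (w ω i - z i) * y i := by
        rw [Finset.mul_sum, ← Finset.sum_sub_distrib]
        exact Finset.sum_congr rfl fun i _ => by simp [hy']; ring
      have h2 := mul_le_mul_of_nonneg_left h1 hγ.le
      linarith
    have hIy : ∫ ω, Real.exp (∑ i, w ω i * y' i) ∂μ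
        ≤ Real.exp (∑ i, z i * y' i - γ * f z) * I := by
      rw [hI, ← integral_const_mul]
      exact integral_mono (hint y') (hfint.const_mul _) hpt
    have hy'pos : 0 < ∫ ω, Real.exp (∑ i, w ω i * y' i) ∂μ := integral_exp_pos (hint y')
    have hρz : ∑ i, z i * y' i - c y' ≤ ρ z := (hρ z).1 ⟨y', rfl⟩
    have hlog : c y' ≤ ∑ i, z i * y' i - γ * f z + Real.log I := by
      rw [hc y']
      calc Real.log (∫ ω, Real.exp (∑ i, w ω i * y' i) ∂μ)
          ≤ Real.log (Real.exp (∑ i, z i * y' i - γ * f z) * I) :=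
            Real.log_le_log hy'pos hIy
        _ = (∑ i, z i * y' i - γ * f z) + Real.log I := by
            rw [Real.log_mul (Real.exp_ne_zero _) hIpos.ne', Real.log_exp]
    linarith
  have hbdd : BddAbove (Set.range fun z : Fin n → ℝ => γ * f z - ρ z) :=
    ⟨Real.log I, by rintro _ ⟨z, rfl⟩; exact key z⟩
  have hγinv : (0:ℝ) ≤ 1 / γ := by positivity
  constructor
  · have h1 : γ * f (fun i => ∫ ω, w ω i ∂μ) - ρ (fun i => ∫ ω, w ω i ∂μ)
        ≤ ⨆ z : Fin n → ℝ, (γ * f z - ρ z) := le_ciSup hbdd _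
    rw [hρmean, sub_zero] at h1
    calc f (fun i => ∫ ω, w ω i ∂μ)
        = (1 / γ) * (γ * f (fun i => ∫ ω, w ω i ∂μ)) := by field_simp
      _ ≤ (1 / γ) * (⨆ z : Fin n → ℝ, (γ * f z - ρ z)) :=
          mul_le_mul_of_nonneg_left h1 hγinv
  · exact mul_le_mul_of_nonneg_left (ciSup_le key) hγinv
end

section
/- For γ < 0 and a convex function J_pr, the bound inf_w (J_pr(w) − (1/γ) ρ(w)) ≤ R_γ(J_pr(w)) holds, where the infimum is over all deterministic vectors w, and the objective of the infimum is a convex function (sum of convex J_pr and convex −(1/γ)ρ with −1/γ > 0). -/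
open MeasureTheory Real

lemma exists_subgradient' {n : ℕ} {J : (Fin n → ℝ) → ℝ} (hJ : ConvexOn ℝ Set.univ J)
    (x₀ : Fin n → ℝ) :
    ∃ g : Fin n → ℝ, ∀ x, J x₀ + (∑ i, x i * g i) - (∑ i, x₀ i * g i) ≤ J x := by
  have hcont : Continuous J :=
    continuousOn_univ.1 (hJ.continuousOn isOpen_univ)
  set S : Set ((Fin n → ℝ) × ℝ) := {p | J p.1 < p.2} with hS
  have hSopen : IsOpen S := isOpen_lt (hcont.comp continuous_fst) continuous_snd
  have hSconv : Convex ℝ S := by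
    have := hJ.convex_strict_epigraph
    simpa [Set.mem_univ, true_and] using this
  have hpt : ((x₀, J x₀) : (Fin n → ℝ) × ℝ) ∉ S := by simp [hS]
  obtain ⟨f, hf⟩ := geometric_hahn_banach_open_point hSconv hSopen hpt
  set β : ℝ := f (0, 1) with hβ
  have hdecomp : ∀ (x : Fin n → ℝ) (t : ℝ), f (x, t) = f (x, 0) + t * β := by
    intro x t
    have : (x, t) = (x, (0:ℝ)) + t • ((0 : Fin n → ℝ), (1:ℝ)) := by
      simp [Prod.ext_iff]
    rw [this, map_add, _root_.map_smul, smul_eq_mul, hβ]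
  have hβneg : β < 0 := by
    have h1 := hf (x₀, J x₀ + 1) (by simp [hS])
    rw [hdecomp x₀ (J x₀ + 1), hdecomp x₀ (J x₀)] at h1
    linarith
  have hβpos : (0:ℝ) < -β := by linarith
  have key : ∀ x, f (x, 0) + J x * β ≤ f (x₀, 0) + J x₀ * β := by
    intro x
    by_contra h
    push_neg at h
    set d : ℝ := (f (x, 0) + J x * β) - (f (x₀, 0) + J x₀ * β) with hd
    have hdpos : 0 < d := by linarith
    have hmem : (x, J x + d / (-β)) ∈ S := by
      simp only [hS, Set.mem_setOf_eq]
      have : 0 < d / (-β) := div_pos hdpos hβpos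
      linarith
    have h2 := hf _ hmem
    rw [hdecomp x (J x + d / (-β)), hdecomp x₀ (J x₀)] at h2
    have h3 : (J x + d / (-β)) * β = J x * β - d := by
      have hβ0 : β ≠ 0 := hβneg.ne
      field_simp
      ring
    rw [h3] at h2
    linarith
  have hz1 : ∀ z : Fin n → ℝ, (z, (0:ℝ)) = ∑ i, (z i) • ((Pi.single i (1:ℝ) : Fin n → ℝ), (0:ℝ)) := by
    intro z
    rw [Prod.ext_iff]
    constructor
    · rw [Prod.fst_sum]
      funext j
      simp [Finset.sum_apply, Pi.single_apply]
    · rw [Prod.snd_sum]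
      simp
  have hL : ∀ z : Fin n → ℝ, ∑ i, z i * (f (Pi.single i 1, 0) / (-β)) = f (z, 0) / (-β) := by
    intro z
    have : f (z, 0) = ∑ i, z i * f (Pi.single i 1, 0) := by
      conv_lhs => rw [hz1 z]
      rw [map_sum]
      refine Finset.sum_congr rfl fun i _ => ?_
      rw [_root_.map_smul, smul_eq_mul]
    rw [this, Finset.sum_div]
    simp [mul_div_assoc]
  refine ⟨fun i => f (Pi.single i 1, 0) / (-β), fun x => ?_⟩
  rw [hL x, hL x₀]
  have h3 : (f (x, 0) - f (x₀, 0)) / (-β) ≤ J x - J x₀ := by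
    rw [div_le_iff₀ hβpos]
    have := key x
    nlinarith [key x]
  have h4 : f (x, 0) / (-β) - f (x₀, 0) / (-β) = (f (x, 0) - f (x₀, 0)) / (-β) :=
    (sub_div _ _ _).symm
  linarith

/-- For γ < 0: inf_w (J_pr(w) − (1/γ) ρ(w)) ≤ R_γ(J_pr(w)), and the
objective of the infimum is convex. -/
theorem prescient_bound_risk_seeking {Ω : Type*} [MeasurableSpace Ω]
    (μ : Measure Ω) [IsProbabilityMeasure μ] {n : ℕ}
    (w : Ω → Fin n → ℝ)
    (c : (Fin n → ℝ) → ℝ) (ρ : (Fin n → ℝ) → ℝ)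
    (Jpr : (Fin n → ℝ) → ℝ) (γ : ℝ) (hγ : γ < 0)
    (hJ : ConvexOn ℝ Set.univ Jpr)
    (hint : ∀ y : Fin n → ℝ,
      Integrable (fun ω => Real.exp (∑ i, w ω i * y i)) μ)
    (hc : ∀ y, c y = Real.log (∫ ω, Real.exp (∑ i, w ω i * y i) ∂μ))
    (hρ : ∀ x, IsLUB {r : ℝ | ∃ y : Fin n → ℝ, r = ∑ i, x i * y i - c y} (ρ x))
    (hJint : Integrable (fun ω => Real.exp (γ * Jpr (w ω))) μ) :
    (⨅ w₀ : Fin n → ℝ, ((Jpr w₀ - (1 / γ) * ρ w₀ : ℝ) : EReal))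
        ≤ (((1 / γ) * Real.log (∫ ω, Real.exp (γ * Jpr (w ω)) ∂μ) : ℝ) : EReal) ∧
    ConvexOn ℝ Set.univ (fun w₀ => Jpr w₀ - (1 / γ) * ρ w₀) := by
  have hγ' : 1 / γ < 0 := div_neg_of_pos_of_neg one_pos hγ
  -- convexity of ρ
  have hρub : ∀ x y, (∑ i, x i * y i) - c y ≤ ρ x := fun x y => (hρ x).1 ⟨y, rfl⟩
  have hρconv : ConvexOn ℝ Set.univ ρ := by
    refine ⟨convex_univ, fun x _ z _ p q hp hq hpq => ?_⟩
    simp only [smul_eq_mul]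
    refine (hρ (p • x + q • z)).2 ?_
    rintro r ⟨y, rfl⟩
    have expand : (∑ i, (p • x + q • z) i * y i)
        = p * (∑ i, x i * y i) + q * (∑ i, z i * y i) := by
      simp only [Pi.add_apply, Pi.smul_apply, smul_eq_mul]
      rw [Finset.mul_sum, Finset.mul_sum, ← Finset.sum_add_distrib]
      exact Finset.sum_congr rfl fun i _ => by ring
    have h1 : (∑ i, (p • x + q • z) i * y i) - c y
        = p * ((∑ i, x i * y i) - c y) + q * ((∑ i, z i * y i) - c y) := by
      rw [expand]; linear_combination (c y) * hpq
    rw [h1]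
    have := hρub x y
    have := hρub z y
    nlinarith
  have hconvObj : ConvexOn ℝ Set.univ (fun w₀ => Jpr w₀ - (1 / γ) * ρ w₀) := by
    have hpos : (0:ℝ) ≤ -(1/γ) := by linarith
    have h2 := hJ.add (hρconv.smul hpos)
    have heq : (fun w₀ => Jpr w₀ - (1 / γ) * ρ w₀)
        = (Jpr + (-(1/γ)) • ρ) := by
      funext x; simp only [Pi.add_apply, Pi.smul_apply, smul_eq_mul]; ring
    rw [heq]; exact h2
  refine ⟨?_, hconvObj⟩
  -- setup
  set a : Ω → ℝ := fun ω => Real.exp (γ * Jpr (w ω)) with ha_def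
  set A : ℝ := ∫ ω, a ω ∂μ with hA_def
  have hA : 0 < A := integral_exp_pos hJint
  have hcont : Continuous Jpr :=
    continuousOn_univ.1 (hJ.continuousOn isOpen_univ)
  have hwi : ∀ i, AEMeasurable (fun ω => w ω i) μ := by
    intro i
    have h1 := (hint (Pi.single i 1)).aestronglyMeasurable.aemeasurable
    have h2 : ∀ ω, (∑ j, w ω j * (Pi.single i 1 : Fin n → ℝ) j) = w ω i := by
      intro ω
      simp [Pi.single_apply]
    have h3 := Real.measurable_log.comp_aemeasurable h1
    simpa [Function.comp_def, h2, Real.log_exp] using h3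
  have hwm : AEMeasurable w μ := by
    choose g hm heq using hwi
    refine ⟨fun ω i => g i ω, measurable_pi_iff.2 hm, ?_⟩
    have h4 : ∀ᵐ ω ∂μ, ∀ i, w ω i = g i ω := ae_all_iff.2 fun i => heq i
    filter_upwards [h4] with ω h5
    funext i; exact h5 i
  have hJw : AEMeasurable (fun ω => Jpr (w ω)) μ :=
    hcont.measurable.comp_aemeasurable hwm
  have ha_m : AEMeasurable a μ :=
    Real.measurable_exp.comp_aemeasurable (hJw.const_mul γ)
  have hintC : ∀ (C : ℝ) (y : Fin n → ℝ),
      Integrable (fun ω => Real.exp (C + ∑ i, w ω i * y i)) μ := by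
    intro C y
    simpa [Real.exp_add] using (hint y).const_mul (Real.exp C)
  obtain ⟨g₀, hg₀⟩ := exists_subgradient' hJ 0
  set b : ℝ := Jpr 0 with hb_def
  have hg₀' : ∀ x, b + ∑ i, x i * g₀ i ≤ Jpr x := by
    intro x
    have := hg₀ x
    simpa using this
  have hkey : ∀ (t : ℝ), t ≤ 0 → ∀ x, Real.exp (t * Jpr x)
      ≤ Real.exp (t * b + ∑ i, x i * (t * g₀ i)) := by
    intro t ht x
    apply Real.exp_le_exp.2
    have h := hg₀' x
    have hsum : (∑ i, x i * (t * g₀ i)) = t * ∑ i, x i * g₀ i := by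
      rw [Finset.mul_sum]
      exact Finset.sum_congr rfl fun i _ => by ring
    rw [hsum]
    nlinarith
  have habs : ∀ u : ℝ, |u| ≤ Real.exp u + Real.exp (-u) := by
    intro u
    have h1 := Real.add_one_le_exp u
    have h2 := Real.add_one_le_exp (-u)
    have h3 := Real.exp_pos u
    have h4 := Real.exp_pos (-u)
    rw [abs_le]; constructor <;> linarith
  -- integrability of w i * a
  have hI1 : ∀ i, Integrable (fun ω => w ω i * a ω) μ := by
    intro i
    have hs1 : ∀ ω, (∑ j, w ω j * (γ * g₀ j + (Pi.single i 1 : Fin n → ℝ) j))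
        = (∑ j, w ω j * (γ * g₀ j)) + w ω i := by
      intro ω
      have e : ∀ j, w ω j * (γ * g₀ j + (Pi.single i 1 : Fin n → ℝ) j)
          = w ω j * (γ * g₀ j) + w ω j * (Pi.single i 1 : Fin n → ℝ) j := fun j => by ring
      simp only [e]
      rw [Finset.sum_add_distrib]
      congr 1
      simp [Pi.single_apply]
    have hs2 : ∀ ω, (∑ j, w ω j * (γ * g₀ j - (Pi.single i 1 : Fin n → ℝ) j))
        = (∑ j, w ω j * (γ * g₀ j)) - w ω i := by
      intro ω
      have e : ∀ j, w ω j * (γ * g₀ j - (Pi.single i 1 : Fin n → ℝ) j)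
          = w ω j * (γ * g₀ j) - w ω j * (Pi.single i 1 : Fin n → ℝ) j := fun j => by ring
      simp only [e]
      rw [Finset.sum_sub_distrib]
      congr 1
      simp [Pi.single_apply]
    refine Integrable.mono'
      (g := fun ω => Real.exp (γ * b + ∑ j, w ω j * (γ * g₀ j + (Pi.single i 1 : Fin n → ℝ) j))
        + Real.exp (γ * b + ∑ j, w ω j * (γ * g₀ j - (Pi.single i 1 : Fin n → ℝ) j)))
      ((hintC (γ * b) _).add (hintC (γ * b) _))
      (((hwi i).mul ha_m).aestronglyMeasurable)
      (Filter.Eventually.of_forall fun ω => ?_)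
    rw [hs1 ω, hs2 ω]
    set u : ℝ := w ω i with hu
    set E : ℝ := ∑ j, w ω j * (γ * g₀ j) with hE
    have hA1 : a ω ≤ Real.exp (γ * b + E) := hkey γ hγ.le (w ω)
    have hapos : 0 < a ω := Real.exp_pos _
    calc ‖u * a ω‖ = |u| * a ω := by
          rw [norm_mul, Real.norm_eq_abs, Real.norm_eq_abs, abs_of_pos hapos]
      _ ≤ (Real.exp u + Real.exp (-u)) * Real.exp (γ * b + E) := by
          apply mul_le_mul (habs u) hA1 hapos.le
          positivity
      _ = Real.exp (γ * b + (E + u)) + Real.exp (γ * b + (E - u)) := by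
          rw [add_mul, ← Real.exp_add, ← Real.exp_add,
            show u + (γ * b + E) = γ * b + (E + u) by ring,
            show -u + (γ * b + E) = γ * b + (E - u) by ring]
  -- integrability of Jpr (w ·) * a
  have hI2 : Integrable (fun ω => Jpr (w ω) * a ω) μ := by
    refine Integrable.mono'
      (g := fun ω => Real.exp (-1) / (-γ)
        + Real.exp ((γ - 1) * b + ∑ j, w ω j * ((γ - 1) * g₀ j)))
      ((integrable_const _).add (hintC ((γ - 1) * b) _))
      ((hJw.mul ha_m).aestronglyMeasurable)
      (Filter.Eventually.of_forall fun ω => ?_)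
    set u : ℝ := Jpr (w ω) with hu
    have hupper : u * a ω ≤ Real.exp (-1) / (-γ) := by
      have h1 := Real.add_one_le_exp (-(γ * u) - 1)
      have h2 : Real.exp (-(γ * u) - 1) * Real.exp (γ * u) = Real.exp (-1) := by
        rw [← Real.exp_add]; ring_nf
      have h3 : (-(γ * u)) * Real.exp (γ * u) ≤ Real.exp (-1) := by
        nlinarith [Real.exp_pos (γ * u)]
      rw [le_div_iff₀ (by linarith : (0:ℝ) < -γ)]
      have : a ω = Real.exp (γ * u) := rfl
      rw [this]
      nlinarith
    have hlower : -(Real.exp ((γ - 1) * u)) ≤ u * a ω := by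
      rcases le_or_gt 0 u with h | h
      · have : 0 ≤ u * a ω := mul_nonneg h (Real.exp_pos _).le
        nlinarith [Real.exp_pos ((γ - 1) * u)]
      · have h1 := Real.add_one_le_exp (-u)
        have h2 : a ω = Real.exp (γ * u) := rfl
        have h3 : Real.exp (-u) * Real.exp (γ * u) = Real.exp ((γ - 1) * u) := by
          rw [← Real.exp_add]; ring_nf
        nlinarith [Real.exp_pos (γ * u), Real.exp_pos (-u)]
    have hexp2 : Real.exp ((γ - 1) * u)
        ≤ Real.exp ((γ - 1) * b + ∑ j, w ω j * ((γ - 1) * g₀ j)) :=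
      hkey (γ - 1) (by linarith) (w ω)
    have hCpos : 0 < Real.exp (-1) / (-γ) := div_pos (Real.exp_pos _) (by linarith)
    rw [Real.norm_eq_abs, abs_le]
    constructor
    · linarith [Real.exp_pos ((γ - 1) * b + ∑ j, w ω j * ((γ - 1) * g₀ j))]
    · linarith [(Real.exp_pos ((γ - 1) * b + ∑ j, w ω j * ((γ - 1) * g₀ j))).le]
  -- the tilted mean
  set w₀ : Fin n → ℝ := fun i => (∫ ω, w ω i * a ω ∂μ) / A with hw₀
  set m : ℝ := (∫ ω, Jpr (w ω) * a ω ∂μ) / A with hm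
  have hw₀A : ∀ i, (∫ ω, w ω i * a ω ∂μ) = w₀ i * A := by
    intro i; rw [hw₀]; field_simp
  have hmA : (∫ ω, Jpr (w ω) * a ω ∂μ) = m * A := by
    rw [hm]; field_simp
  -- Gibbs inequality
  have hgibbs : ∀ y, (∑ i, w₀ i * y i) - c y ≤ γ * m - Real.log A := by
    intro y
    set M : ℝ := (∑ i, w₀ i * y i) - γ * m with hM
    have hpt : ∀ ω, Real.exp M * ((∑ i, y i * (w ω i * a ω))
        - γ * (Jpr (w ω) * a ω) + (1 - M) * a ω) ≤ Real.exp (∑ i, w ω i * y i) := by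
      intro ω
      set h : ℝ := (∑ i, w ω i * y i) - γ * Jpr (w ω) with hh
      have hsum : (∑ i, y i * (w ω i * a ω)) = (∑ i, w ω i * y i) * a ω := by
        rw [Finset.sum_mul]; exact Finset.sum_congr rfl fun i _ => by ring
      have hinner : (∑ i, y i * (w ω i * a ω)) - γ * (Jpr (w ω) * a ω) + (1 - M) * a ω
          = a ω * (h - M + 1) := by
        rw [hsum, hh]; ring
      rw [hinner]
      have h1 : h - M + 1 ≤ Real.exp (h - M) := by
        have := Real.add_one_le_exp (h - M); linarith
      have h2 : a ω * (h - M + 1) ≤ a ω * Real.exp (h - M) :=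
        mul_le_mul_of_nonneg_left h1 (Real.exp_pos _).le
      have h3 : Real.exp M * (a ω * Real.exp (h - M)) = Real.exp (∑ i, w ω i * y i) := by
        show Real.exp M * (Real.exp (γ * Jpr (w ω)) * Real.exp (h - M)) = _
        rw [← Real.exp_add, ← Real.exp_add]
        congr 1
        rw [hh]; ring
      calc Real.exp M * (a ω * (h - M + 1)) ≤ Real.exp M * (a ω * Real.exp (h - M)) := by
            apply mul_le_mul_of_nonneg_left h2 (Real.exp_pos _).le
        _ = Real.exp (∑ i, w ω i * y i) := h3
    have hisum : Integrable (fun ω => ∑ i, y i * (w ω i * a ω)) μ :=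
      integrable_finset_sum _ (fun i _ => ((hI1 i).const_mul (y i)))
    have hlhs_int : Integrable (fun ω => Real.exp M * ((∑ i, y i * (w ω i * a ω))
        - γ * (Jpr (w ω) * a ω) + (1 - M) * a ω)) μ :=
      (((hisum.sub (hI2.const_mul γ)).add (hJint.const_mul (1 - M))).const_mul (Real.exp M))
    have hmono := integral_mono hlhs_int (hint y) (fun ω => hpt ω)
    have hlhs_val : (∫ ω, Real.exp M * ((∑ i, y i * (w ω i * a ω))
        - γ * (Jpr (w ω) * a ω) + (1 - M) * a ω) ∂μ) = A * Real.exp M := by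
      have h_sub : Integrable (fun ω => (∑ i, y i * (w ω i * a ω))
          - γ * (Jpr (w ω) * a ω)) μ := hisum.sub (hI2.const_mul γ)
      have h_cm : Integrable (fun ω => (1 - M) * a ω) μ := hJint.const_mul (1 - M)
      rw [integral_const_mul, integral_add h_sub h_cm,
        integral_sub hisum (hI2.const_mul γ),
        integral_finset_sum _ (fun i _ => ((hI1 i).const_mul (y i)))]
      simp only [integral_const_mul]
      have e1 : ∀ i ∈ Finset.univ, y i * (∫ ω, w ω i * a ω ∂μ) = y i * w₀ i * A := by
        intro i _; rw [hw₀A i]; ring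
      rw [Finset.sum_congr rfl e1, hmA, ← hA_def]
      have e3 : (∑ i, y i * w₀ i * A) = (∑ i, w₀ i * y i) * A := by
        rw [Finset.sum_mul]; exact Finset.sum_congr rfl fun i _ => by ring
      rw [e3, hM]
      ring
    have hcy : Real.exp (c y) = ∫ ω, Real.exp (∑ i, w ω i * y i) ∂μ := by
      rw [hc y, Real.exp_log (integral_exp_pos (hint y))]
    rw [hlhs_val, ← hcy] at hmono
    have hlog : Real.log A + M ≤ c y := by
      have h4 : Real.log (A * Real.exp M) ≤ Real.log (Real.exp (c y)) :=
        Real.log_le_log (by positivity) hmono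
      rw [Real.log_mul hA.ne' (Real.exp_pos _).ne', Real.log_exp, Real.log_exp] at h4
      exact h4
    rw [hM] at hlog
    linarith
  -- Jensen
  have hjen : Jpr w₀ ≤ m := by
    obtain ⟨g₁, hg₁⟩ := exists_subgradient' hJ w₀
    set K : ℝ := Jpr w₀ - ∑ i, w₀ i * g₁ i with hK
    have hpt : ∀ ω, K * a ω + ∑ i, g₁ i * (w ω i * a ω) ≤ Jpr (w ω) * a ω := by
      intro ω
      have h1 := hg₁ (w ω)
      have h2 : (K + ∑ i, w ω i * g₁ i) * a ω ≤ Jpr (w ω) * a ω := by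
        apply mul_le_mul_of_nonneg_right _ (Real.exp_pos _).le
        rw [hK]; linarith
      have h3 : (K + ∑ i, w ω i * g₁ i) * a ω
          = K * a ω + ∑ i, g₁ i * (w ω i * a ω) := by
        rw [add_mul, Finset.sum_mul]
        congr 1
        exact Finset.sum_congr rfl fun i _ => by ring
      linarith [h3 ▸ h2]
    have hlhs_int : Integrable (fun ω => K * a ω + ∑ i, g₁ i * (w ω i * a ω)) μ :=
      (hJint.const_mul K).add (integrable_finset_sum _ (fun i _ => (hI1 i).const_mul (g₁ i)))
    have hmono := integral_mono hlhs_int hI2 (fun ω => hpt ω)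
    have hval : (∫ ω, (K * a ω + ∑ i, g₁ i * (w ω i * a ω)) ∂μ) = Jpr w₀ * A := by
      have h_cm : Integrable (fun ω => K * a ω) μ := hJint.const_mul K
      have h_fs : Integrable (fun ω => ∑ i, g₁ i * (w ω i * a ω)) μ :=
        integrable_finset_sum _ (fun i _ => (hI1 i).const_mul (g₁ i))
      rw [integral_add h_cm h_fs,
        integral_finset_sum _ (fun i _ => (hI1 i).const_mul (g₁ i))]
      simp only [integral_const_mul]
      have e1 : ∀ i ∈ Finset.univ, g₁ i * (∫ ω, w ω i * a ω ∂μ) = w₀ i * g₁ i * A := by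
        intro i _; rw [hw₀A i]; ring
      rw [Finset.sum_congr rfl e1, ← Finset.sum_mul, hK]
      ring
    rw [hval, hmA] at hmono
    exact le_of_mul_le_mul_right hmono hA
  -- combine
  have hρle : ρ w₀ ≤ γ * m - Real.log A := by
    refine (hρ w₀).2 ?_
    rintro r ⟨y, rfl⟩
    exact hgibbs y
  have hobj : Jpr w₀ - (1 / γ) * ρ w₀ ≤ (1 / γ) * Real.log A := by
    have h1 : -(1/γ) * ρ w₀ ≤ -(1/γ) * (γ * m - Real.log A) :=
      mul_le_mul_of_nonneg_left hρle (by linarith)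
    have h2 : -(1/γ) * (γ * m - Real.log A) = -m + (1/γ) * Real.log A := by
      have hγ0 : γ ≠ 0 := ne_of_lt hγ
      field_simp
      ring
    nlinarith
  refine le_trans (iInf_le _ w₀) ?_
  exact_mod_cast hobj
end
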